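/- Suppose η : [ζ₀, ζ₀ + L] → ℝ is twice continuously differentiable with η'' + a·η = 0, η(ζ₀) = 1, η'(ζ₀) = 0, where a is continuous and a(ζ) ≥ (π/(2L))² for all ζ ∈ [ζ₀, ζ₀ + L]. Then η vanishes at some point of [ζ₀, ζ₀ + L]. -/

import Mathlib

theorem stmt_8 (ζ₀ L : ℝ) (hL : 0 < L) (η η' a : ℝ → ℝ)
    (ha : ContinuousOn a (Set.Icc ζ₀ (ζ₀ + L)))
    (hη' : ∀ ζ ∈ Set.Icc ζ₀ (ζ₀ + L),
      HasDerivWithinAt η (η' ζ) (Set.Icc ζ₀ (ζ₀ + L)) ζ)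
    (hη'' : ∀ ζ ∈ Set.Icc ζ₀ (ζ₀ + L),
      HasDerivWithinAt η' (-(a ζ * η ζ)) (Set.Icc ζ₀ (ζ₀ + L)) ζ)
    (hη'cont : ContinuousOn η' (Set.Icc ζ₀ (ζ₀ + L)))
    (h0 : η ζ₀ = 1) (h0' : η' ζ₀ = 0)
    (halb : ∀ ζ ∈ Set.Icc ζ₀ (ζ₀ + L), (Real.pi / (2 * L))^2 ≤ a ζ) :
    ∃ ζ ∈ Set.Icc ζ₀ (ζ₀ + L), η ζ = 0 := by
  by_contra hcon
  push_neg at hcon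
  set I := Set.Icc ζ₀ (ζ₀ + L) with hI
  set k := Real.pi / (2 * L) with hk
  have hkpos : 0 < k := div_pos Real.pi_pos (by linarith)
  have hkL : k * L = Real.pi / 2 := by
    field_simp [hk]
    rw [hk]; field_simp
  have hmem0 : ζ₀ ∈ I := ⟨le_refl _, by linarith⟩
  have hmem1 : ζ₀ + L ∈ I := ⟨by linarith, le_refl _⟩
  have hηcont : ContinuousOn η I := fun x hx => (hη' x hx).continuousWithinAt
  -- η stays positive
  have hpos : ∀ ζ ∈ I, 0 < η ζ := by
    intro ζ hζ
    rcases lt_or_ge 0 (η ζ) with h' | h'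
    · exact h'
    exfalso
    have hsub : Set.Icc ζ₀ ζ ⊆ I := Set.Icc_subset_Icc le_rfl hζ.2
    have := intermediate_value_Icc' hζ.1 (hηcont.mono hsub)
    have h0mem : (0 : ℝ) ∈ Set.Icc (η ζ) (η ζ₀) := by
      rw [h0]; exact ⟨h', zero_le_one⟩
    obtain ⟨x, hx, hx0⟩ := this h0mem
    exact hcon x (hsub hx) hx0
  -- comparison functions
  set s : ℝ → ℝ := fun ζ => Real.sin (k * (ζ - ζ₀)) with hs
  set c : ℝ → ℝ := fun ζ => Real.cos (k * (ζ - ζ₀)) with hc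
  have hlin : ∀ ζ : ℝ, HasDerivAt (fun ζ => k * (ζ - ζ₀)) k ζ := by
    intro ζ
    simpa using ((hasDerivAt_id ζ).sub_const ζ₀).const_mul k
  have hsd : ∀ ζ : ℝ, HasDerivAt s (Real.cos (k * (ζ - ζ₀)) * k) ζ :=
    fun ζ => (hlin ζ).sin
  have hcd : ∀ ζ : ℝ, HasDerivAt c (-Real.sin (k * (ζ - ζ₀)) * k) ζ :=
    fun ζ => (hlin ζ).cos
  set W : ℝ → ℝ := fun ζ => η ζ * (-k * s ζ) - η' ζ * c ζ with hW
  have hWd : ∀ ζ ∈ I, HasDerivWithinAt W ((a ζ - k ^ 2) * η ζ * c ζ) I ζ := by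
    intro ζ hζ
    have h1 : HasDerivWithinAt (fun x => η x * (-k * s x))
        (η' ζ * (-k * s ζ) + η ζ * (-k * (Real.cos (k * (ζ - ζ₀)) * k))) I ζ :=
      (hη' ζ hζ).mul (((hsd ζ).const_mul (-k)).hasDerivWithinAt)
    have h2 : HasDerivWithinAt (fun x => η' x * c x)
        (-(a ζ * η ζ) * c ζ + η' ζ * (-Real.sin (k * (ζ - ζ₀)) * k)) I ζ :=
      (hη'' ζ hζ).mul ((hcd ζ).hasDerivWithinAt)
    have := h1.sub h2
    refine this.congr_deriv ?_
    simp only [hs, hc]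
    ring
  have hscont : Continuous s := Real.continuous_sin.comp (continuous_const.mul (continuous_id.sub continuous_const))
  have hccont : Continuous c := Real.continuous_cos.comp (continuous_const.mul (continuous_id.sub continuous_const))
  have hWcont : ContinuousOn W I :=
    (hηcont.mul ((continuous_const.mul hscont).continuousOn)).sub
      (hη'cont.mul hccont.continuousOn)
  have hmono : MonotoneOn W I := by
    apply monotoneOn_of_hasDerivWithinAt_nonneg (convex_Icc _ _) hWcont
      (f' := fun ζ => (a ζ - k ^ 2) * η ζ * c ζ)
    · intro x hx
      exact ((hWd x (interior_subset hx)).mono interior_subset)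
    · intro x hx
      have hx' : x ∈ I := interior_subset hx
      have h1 : 0 ≤ a x - k ^ 2 := by
        have := halb x hx'
        linarith
      have h2 : 0 ≤ c x := by
        apply Real.cos_nonneg_of_mem_Icc
        constructor
        · have : 0 ≤ k * (x - ζ₀) := mul_nonneg hkpos.le (by linarith [hx'.1])
          linarith [Real.pi_pos]
        · have : k * (x - ζ₀) ≤ k * L := by
            apply mul_le_mul_of_nonneg_left _ hkpos.le
            linarith [hx'.2]
          linarith [hkL]
      exact mul_nonneg (mul_nonneg h1 (hpos x hx').le) h2
  have hle := hmono hmem0 hmem1 (by linarith)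
  have hW0 : W ζ₀ = 0 := by
    simp [hW, hs, hc, h0, h0']
  have hW1 : W (ζ₀ + L) = -k * η (ζ₀ + L) := by
    have harg : k * (ζ₀ + L - ζ₀) = Real.pi / 2 := by
      rw [add_sub_cancel_left]; exact hkL
    simp only [hW, hs, hc, harg, Real.sin_pi_div_two, Real.cos_pi_div_two]
    ring
  rw [hW0, hW1] at hle
  have := hpos (ζ₀ + L) hmem1
  nlinarith
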